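/- Let g be a nonzero homogeneous polynomial of degree d ≥ 1 in n+1 variables with nonnegative coefficients, and let p ∈ [1,∞). If w ≥ 0 with ‖w‖_p = 1 is a local maximum point of g on the ball {z : ‖z‖_p ≤ 1}, then for every index j with w_j > 0 one has (1/d)·∂g/∂z_j(w) = g(w)·w_j^{p−1}. -/

import Mathlib

open MvPolynomial Finset Filter Topology

lemma aux_hasDerivAt_eval {m : ℕ} (j : Fin m) (w : Fin m → ℝ) (g : MvPolynomial (Fin m) ℝ) (x : ℝ) :
    HasDerivAt (fun t => MvPolynomial.eval (Function.update w j t) g)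
      (MvPolynomial.eval (Function.update w j x) (MvPolynomial.pderiv j g)) x := by
  induction g using MvPolynomial.induction_on with
  | C a => simpa using hasDerivAt_const x a
  | add q r hq hr =>
    have h : HasDerivAt (fun t => MvPolynomial.eval (Function.update w j t) q +
        MvPolynomial.eval (Function.update w j t) r)
        (MvPolynomial.eval (Function.update w j x) (MvPolynomial.pderiv j q) +
          MvPolynomial.eval (Function.update w j x) (MvPolynomial.pderiv j r)) x := hq.add hr
    simpa [mul_comm] using h
  | mul_X q i hq =>
    rcases eq_or_ne i j with rfl | hij
    · have : HasDerivAt (fun t => MvPolynomial.eval (Function.update w i t) q * id t)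
          (MvPolynomial.eval (Function.update w i x) (MvPolynomial.pderiv i q) * id x +
            MvPolynomial.eval (Function.update w i x) q * 1) x := hq.mul (hasDerivAt_id x)
      simpa [Function.update_self, pderiv_mul, pderiv_X_self, mul_comm, mul_add, add_comm]
        using this
    · have := hq.mul_const (w i)
      simpa [Function.update_of_ne, hij, pderiv_mul, pderiv_X_of_ne hij.symm, mul_comm] using this

lemma aux_eval_smul {m : ℕ} {d : ℕ} {g : MvPolynomial (Fin m) ℝ} (h : g.IsHomogeneous d)
    (c : ℝ) (x : Fin m → ℝ) :
    MvPolynomial.eval (c • x) g = c ^ d * MvPolynomial.eval x g := by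
  rw [MvPolynomial.eval_eq', MvPolynomial.eval_eq', Finset.mul_sum]
  refine Finset.sum_congr rfl fun mo hm => ?_
  have hdeg : ∑ i, mo i = d := by
    have h1 := h (MvPolynomial.mem_support_iff.mp hm)
    rw [← h1]
    simp [Finsupp.weight_apply, Finsupp.sum]
    exact (Finset.sum_subset (Finset.subset_univ _) (by
      intro i _ hi; simpa using Finsupp.notMem_support_iff.mp hi)).symm
  calc MvPolynomial.coeff mo g * ∏ i, (c • x) i ^ mo i
      = MvPolynomial.coeff mo g * (c ^ (∑ i, mo i) * ∏ i, x i ^ mo i) := by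
        rw [← Finset.prod_pow_eq_pow_sum, ← Finset.prod_mul_distrib]
        simp [mul_pow]
    _ = c ^ d * (MvPolynomial.coeff mo g * ∏ i, x i ^ mo i) := by rw [hdeg]; ring

theorem stmt12 {n : ℕ} (d : ℕ) (hd : 1 ≤ d)
    (g : MvPolynomial (Fin (n + 1)) ℝ) (hg : g ≠ 0)
    (hhom : g.IsHomogeneous d) (hcoeff : ∀ mo, 0 ≤ g.coeff mo)
    (p : ℝ) (hp : 1 ≤ p)
    (w : Fin (n + 1) → ℝ) (hw : ∀ i, 0 ≤ w i)
    (hwn : (∑ i, |w i| ^ p) ^ (1 / p) = 1)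
    (hmax : IsLocalMaxOn (fun z => MvPolynomial.eval z g)
      {z : Fin (n + 1) → ℝ | (∑ i, |z i| ^ p) ^ (1 / p) ≤ 1} w) :
    ∀ j : Fin (n + 1), 0 < w j →
      (1 / (d : ℝ)) * MvPolynomial.eval w (MvPolynomial.pderiv j g) =
        MvPolynomial.eval w g * w j ^ (p - 1) := by
  intro j hwj
  have hp0 : (0:ℝ) < p := lt_of_lt_of_le one_pos hp
  -- the sum is 1
  have hS0 : (0:ℝ) ≤ ∑ i, |w i| ^ p :=
    Finset.sum_nonneg fun i _ => Real.rpow_nonneg (abs_nonneg _) _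
  have hS : ∑ i, |w i| ^ p = 1 := by
    have h1 : ((∑ i, |w i| ^ p) ^ (1 / p)) ^ p = (1:ℝ) ^ p := by rw [hwn]
    rwa [← Real.rpow_mul hS0, one_div_mul_cancel hp0.ne', Real.rpow_one, Real.one_rpow] at h1
  have hwj1 : w j ^ p ≤ 1 := by
    have h1 : |w j| ^ p ≤ ∑ i, |w i| ^ p := Finset.single_le_sum (f := fun i => |w i| ^ p)
      (fun i _ => Real.rpow_nonneg (abs_nonneg _) _) (Finset.mem_univ j)
    rwa [abs_of_nonneg (hw j), hS] at h1
  set B : ℝ → ℝ := fun t => 1 - w j ^ p + (w j + t) ^ p with hBdef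
  set G : ℝ → ℝ := fun t => MvPolynomial.eval (Function.update w j (w j + t)) g with hGdef
  have hB0 : B 0 = 1 := by simp [hBdef]
  have hG0 : G 0 = MvPolynomial.eval w g := by simp [hGdef]
  -- derivative facts
  have h1 : HasDerivAt (fun t : ℝ => w j + t) 1 0 := (hasDerivAt_id 0).const_add (w j)
  have hrw : HasDerivAt (fun t : ℝ => (w j + t) ^ p) (p * w j ^ (p - 1)) 0 := by
    have h2 : HasDerivAt (fun x : ℝ => x ^ p) (p * (w j + 0) ^ (p - 1)) (w j + 0) :=
      Real.hasDerivAt_rpow_const (Or.inl (by positivity))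
    have h3 := h2.comp 0 h1
    simp only [add_zero, mul_one] at h3
    exact h3
  have hB : HasDerivAt B (p * w j ^ (p - 1)) 0 := by
    simpa [hBdef] using hrw.const_add (1 - w j ^ p)
  have hN : HasDerivAt (fun t => B t ^ ((d:ℝ) / p)) ((d:ℝ) * w j ^ (p - 1)) 0 := by
    have h2 : HasDerivAt (fun y : ℝ => y ^ ((d:ℝ) / p))
        ((d:ℝ) / p * (B 0) ^ ((d:ℝ) / p - 1)) (B 0) :=
      Real.hasDerivAt_rpow_const (Or.inl (by rw [hB0]; norm_num))
    have h3 := h2.comp 0 hB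
    refine h3.congr_deriv ?_
    rw [hB0, Real.one_rpow]
    field_simp
  have hG : HasDerivAt G (MvPolynomial.eval w (MvPolynomial.pderiv j g)) 0 := by
    have h2 : HasDerivAt (fun x => MvPolynomial.eval (Function.update w j x) g)
        (MvPolynomial.eval (Function.update w j (w j + 0)) (MvPolynomial.pderiv j g)) (w j + 0) :=
      aux_hasDerivAt_eval j w g (w j + 0)
    have h3 := h2.comp 0 h1
    simp only [add_zero, Function.update_eq_self, mul_one] at h3
    exact h3
  -- the comparison function
  set ψ : ℝ → ℝ := fun t => MvPolynomial.eval w g * B t ^ ((d:ℝ) / p) - G t with hψdef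
  have hψd : HasDerivAt ψ
      (MvPolynomial.eval w g * ((d:ℝ) * w j ^ (p - 1)) -
        MvPolynomial.eval w (MvPolynomial.pderiv j g)) 0 :=
    (hN.const_mul _).sub hG
  -- positivity of B
  have hBpos : ∀ t : ℝ, 0 < w j + t → 0 < B t := by
    intro t ht
    have h1 : (0:ℝ) < (w j + t) ^ p := Real.rpow_pos_of_pos ht p
    simp only [hBdef]; linarith
  -- sum over update
  have hsum : ∀ t : ℝ, 0 < w j + t →
      ∑ i, |Function.update w j (w j + t) i| ^ p = B t := by
    intro t ht
    have heq : (fun i => |Function.update w j (w j + t) i| ^ p)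
        = Function.update (fun i => |w i| ^ p) j (|w j + t| ^ p) := by
      funext i
      exact Function.apply_update (fun _ y => |y| ^ p) w j (w j + t) i
    rw [heq, Finset.sum_update_of_mem (Finset.mem_univ j),
      Finset.sum_sdiff_eq_sub (Finset.subset_univ {j}), Finset.sum_singleton, hS, abs_of_pos ht,
      abs_of_nonneg (hw j)]
    simp only [hBdef]; ring
  -- the curve
  set z : ℝ → (Fin (n + 1) → ℝ) := fun t => (B t ^ (-(1 / p))) • Function.update w j (w j + t)
    with hzdef
  have hz0 : z 0 = w := by
    simp [hzdef, hB0, Real.one_rpow]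
  have hznorm : ∀ t : ℝ, 0 < w j + t → (∑ i, |z t i| ^ p) ^ (1 / p) = 1 := by
    intro t ht
    have hBt := hBpos t ht
    have hc : 0 < B t ^ (-(1 / p)) := Real.rpow_pos_of_pos hBt _
    have hkey : ∑ i, |z t i| ^ p = 1 := by
      have habs : ∀ i, |z t i| ^ p
          = (B t ^ (-(1 / p))) ^ p * |Function.update w j (w j + t) i| ^ p := by
        intro i
        simp only [hzdef, Pi.smul_apply, smul_eq_mul, abs_mul, abs_of_pos hc]
        rw [Real.mul_rpow hc.le (abs_nonneg _)]
      rw [Finset.sum_congr rfl (fun i _ => habs i), ← Finset.mul_sum, hsum t ht,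
        ← Real.rpow_mul hBt.le, neg_mul, one_div_mul_cancel hp0.ne', Real.rpow_neg_one,
        inv_mul_cancel₀ hBt.ne']
    rw [hkey, Real.one_rpow]
  have hev1 : ∀ᶠ t in 𝓝 (0:ℝ), 0 < w j + t := by
    have hT : Filter.Tendsto (fun t : ℝ => w j + t) (𝓝 0) (𝓝 (w j)) := by
      simpa using (continuous_add_left (w j)).tendsto (0:ℝ)
    exact hT.eventually (eventually_gt_nhds hwj)
  have hzc : ContinuousAt z 0 := by
    have hBc : ContinuousAt B 0 := hB.continuousAt
    have hc1 : ContinuousAt (fun t => B t ^ (-(1 / p))) 0 :=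
      (Real.continuousAt_rpow_const (B 0) (-(1 / p)) (Or.inl (by rw [hB0]; norm_num))).comp hBc
    have hu : ContinuousAt (fun t : ℝ => Function.update w j (w j + t)) 0 := by
      apply Continuous.continuousAt
      apply continuous_pi
      intro i
      simp only [Function.update_apply]
      split_ifs with h
      · exact continuous_const.add continuous_id
      · exact continuous_const
    exact hc1.smul hu
  have hztend : Filter.Tendsto z (𝓝 0)
      (𝓝[{z : Fin (n + 1) → ℝ | (∑ i, |z i| ^ p) ^ (1 / p) ≤ 1}] w) := by
    apply tendsto_nhdsWithin_of_tendsto_nhds_of_eventually_within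
    · exact hz0 ▸ hzc.tendsto
    · filter_upwards [hev1] with t ht
      exact le_of_eq (hznorm t ht)
  have hev2 : ∀ᶠ t in 𝓝 (0:ℝ),
      MvPolynomial.eval (z t) g ≤ MvPolynomial.eval w g := hztend.eventually hmax
  have hmin : IsLocalMin ψ 0 := by
    have hψ0 : ψ 0 = 0 := by simp [hψdef, hB0, hG0, Real.one_rpow]
    filter_upwards [hev1, hev2] with t ht hle
    rw [hψ0]
    have hBt := hBpos t ht
    have hgz : MvPolynomial.eval (z t) g = B t ^ (-((d:ℝ) / p)) * G t := by
      have := aux_eval_smul hhom (B t ^ (-(1 / p))) (Function.update w j (w j + t))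
      rw [hzdef]
      simp only [hGdef]
      rw [this, ← Real.rpow_natCast (B t ^ (-(1 / p))) d, ← Real.rpow_mul hBt.le]
      congr 2
      ring
    rw [hgz] at hle
    have hBd : 0 < B t ^ ((d:ℝ) / p) := Real.rpow_pos_of_pos hBt _
    have hinv : B t ^ (-((d:ℝ) / p)) * B t ^ ((d:ℝ) / p) = 1 := by
      rw [← Real.rpow_add hBt]; simp
    have h5 := mul_le_mul_of_nonneg_right hle hBd.le
    rw [mul_comm (B t ^ (-((d:ℝ) / p))) (G t), mul_assoc, hinv, mul_one] at h5
    simp only [hψdef]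
    linarith
  have hzero := hmin.hasDerivAt_eq_zero hψd
  have hd0 : (d:ℝ) ≠ 0 := Nat.cast_ne_zero.mpr (by omega)
  have hX : MvPolynomial.eval w (MvPolynomial.pderiv j g)
      = MvPolynomial.eval w g * ((d:ℝ) * w j ^ (p - 1)) := by linarith
  rw [hX]
  field_simp
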